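/- Let k be a quasi-complete totally ordered rational tropical semifield and let α : M → N be an injective homomorphism of straight pre-reflexive k-modules. Suppose that M has a basis and that N is finitely generated. Then M is finitely generated. -/

import Mathlib

/-! # Tropical semifields and tropical modules -/

/-- A tropical semifield: a commutative semiring with idempotent addition
(`⊕` is `+`, `⊙` is `*`, the zero element `−∞` is `0`, the unity is `1`)
in which every nonzero element has a multiplicative inverse. -/
class TropSemifield (k : Type*) extends CommSemiring k where
  add_idem : ∀ a : k, a + a = a
  exists_inv : ∀ a : k, a ≠ 0 → ∃ b : k, a * b = 1

/-- A tropical semigroup: commutative idempotent monoid, written additively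
(the zero element is `−∞`). -/
class TropSemigroup (M : Type*) extends AddCommMonoid M where
  add_idem : ∀ v : M, v + v = v

/-- A module over a tropical semifield. -/
class TropModule (k : Type*) (M : Type*) [TropSemifield k] [TropSemigroup M] extends
    SMul k M where
  mul_smul : ∀ (a b : k) (v : M), (a * b) • v = a • b • v
  one_smul : ∀ v : M, (1 : k) • v = v
  add_smul : ∀ (a b : k) (v : M), (a + b) • v = a • v + b • v
  smul_add : ∀ (a : k) (v w : M), a • (v + w) = a • v + a • w
  zero_smul : ∀ v : M, (0 : k) • v = 0
  smul_zero : ∀ a : k, a • (0 : M) = 0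

/-- The canonical partial order `v ≤ w ↔ v ⊕ w = w`. -/
def tle {M : Type*} [Add M] (v w : M) : Prop := v + w = w

/-- Strict version of the canonical order. -/
def tlt {M : Type*} [Add M] (v w : M) : Prop := tle v w ∧ v ≠ w

/-- The canonical order of `k` is total. -/
def TotallyOrderedTSF (k : Type*) [TropSemifield k] : Prop :=
  ∀ a b : k, tle a b ∨ tle b a

/-- Every nonempty subset of `k` admits an infimum. -/
def QuasiCompleteTSF (k : Type*) [TropSemifield k] : Prop :=
  ∀ S : Set k, S.Nonempty →
    ∃ c : k, (∀ x ∈ S, tle c x) ∧ ∀ d : k, (∀ x ∈ S, tle d x) → tle d c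

/-- `k` is rational: `m`-th roots exist and `k` has no maximum element. -/
def RationalTSF (k : Type*) [TropSemifield k] : Prop :=
  (∀ (a : k) (m : ℕ), m ≠ 0 → ∃ b : k, b ^ m = a) ∧ ∀ a : k, ∃ b : k, tlt a b

instance (priority := 100) TropSemifield.toTropSemigroup (k : Type*) [TropSemifield k] :
    TropSemigroup k :=
  { (inferInstance : AddCommMonoid k) with add_idem := TropSemifield.add_idem }

instance TropModule.self (k : Type*) [TropSemifield k] : TropModule k k :=
  { (inferInstance : SMul k k) with
    mul_smul := fun a b v => mul_assoc a b v
    one_smul := fun v => one_mul v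
    add_smul := fun a b v => add_mul a b v
    smul_add := fun a v w => mul_add a v w
    zero_smul := fun v => zero_mul v
    smul_zero := fun a => mul_zero a }

instance TropSemigroup.pi {ι : Type*} (M : Type*) [TropSemigroup M] :
    TropSemigroup (ι → M) :=
  { Pi.addCommMonoid with add_idem := fun v => funext fun i => TropSemigroup.add_idem (v i) }

instance TropModule.pi (k : Type*) {ι : Type*} (M : Type*) [TropSemifield k] [TropSemigroup M]
    [TropModule k M] : TropModule k (ι → M) where
  smul a v := fun i => a • v i
  mul_smul a b v := funext fun i => TropModule.mul_smul a b (v i)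
  one_smul v := funext fun i => TropModule.one_smul (v i)
  add_smul a b v := funext fun i => TropModule.add_smul a b (v i)
  smul_add a v w := funext fun i => TropModule.smul_add a (v i) (w i)
  zero_smul v := funext fun i => TropModule.zero_smul (v i)
  smul_zero a := funext fun i => TropModule.smul_zero (a := a)

/-! ## Homomorphisms of tropical modules -/

/-- A homomorphism of `k`-modules. -/
structure TropHom (k : Type*) (M : Type*) (N : Type*) [TropSemifield k] [TropSemigroup M]
    [TropModule k M] [TropSemigroup N] [TropModule k N] where
  toFun : M → N
  map_zero' : toFun 0 = 0
  map_add' : ∀ v w : M, toFun (v + w) = toFun v + toFun w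
  map_smul' : ∀ (a : k) (v : M), toFun (a • v) = a • toFun v

namespace TropHom

variable {k M N : Type*} [TropSemifield k] [TropSemigroup M] [TropModule k M]
  [TropSemigroup N] [TropModule k N]

theorem ext' {f g : TropHom k M N} (h : ∀ v, f.toFun v = g.toFun v) : f = g := by
  cases f; cases g
  simp only [mk.injEq]
  exact funext h

instance : Zero (TropHom k M N) :=
  ⟨⟨fun _ => 0, rfl, fun _ _ => (add_zero (0 : N)).symm,
    fun a _ => (TropModule.smul_zero (M := N) a).symm⟩⟩

instance : Add (TropHom k M N) :=
  ⟨fun f g =>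
    { toFun := fun v => f.toFun v + g.toFun v
      map_zero' := by
        show f.toFun 0 + g.toFun 0 = 0
        rw [f.map_zero', g.map_zero', add_zero]
      map_add' := fun v w => by
        show f.toFun (v + w) + g.toFun (v + w) =
          (f.toFun v + g.toFun v) + (f.toFun w + g.toFun w)
        rw [f.map_add', g.map_add', add_add_add_comm]
      map_smul' := fun a v => by
        show f.toFun (a • v) + g.toFun (a • v) = a • (f.toFun v + g.toFun v)
        rw [f.map_smul', g.map_smul', TropModule.smul_add] }⟩

instance : SMul k (TropHom k M N) :=
  ⟨fun a f =>
    { toFun := fun v => a • f.toFun v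
      map_zero' := by
        show a • f.toFun 0 = 0
        rw [f.map_zero', TropModule.smul_zero]
      map_add' := fun v w => by
        show a • f.toFun (v + w) = a • f.toFun v + a • f.toFun w
        rw [f.map_add', TropModule.smul_add]
      map_smul' := fun b v => by
        show a • f.toFun (b • v) = b • (a • f.toFun v)
        rw [f.map_smul', ← TropModule.mul_smul, ← TropModule.mul_smul, mul_comm a b] }⟩

instance : TropSemigroup (TropHom k M N) where
  add := (· + ·)
  zero := 0
  add_assoc f g h := ext' fun v => add_assoc (f.toFun v) (g.toFun v) (h.toFun v)
  zero_add f := ext' fun v => zero_add (f.toFun v)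
  add_zero f := ext' fun v => add_zero (f.toFun v)
  add_comm f g := ext' fun v => add_comm (f.toFun v) (g.toFun v)
  nsmul := nsmulRec
  add_idem f := ext' fun v => TropSemigroup.add_idem (f.toFun v)

instance : TropModule k (TropHom k M N) where
  smul := (· • ·)
  mul_smul a b f := ext' fun v => TropModule.mul_smul a b (f.toFun v)
  one_smul f := ext' fun v => TropModule.one_smul (f.toFun v)
  add_smul a b f := ext' fun v => TropModule.add_smul a b (f.toFun v)
  smul_add a f g := ext' fun v => TropModule.smul_add a (f.toFun v) (g.toFun v)
  zero_smul f := ext' fun v => TropModule.zero_smul (f.toFun v)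
  smul_zero a := ext' fun v => TropModule.smul_zero (M := N) a

end TropHom

/-- The canonical map `M → (M∨)∨`, `v ↦ (ξ ↦ ⟨v, ξ⟩)`. -/
def iotaFun (k : Type*) (M : Type*) [TropSemifield k] [TropSemigroup M] [TropModule k M] :
    M → TropHom k (TropHom k M k) k :=
  fun v => ⟨fun ξ => ξ.toFun v, rfl, fun ξ η => rfl, fun a ξ => rfl⟩

/-! ## Order-theoretic notions -/

/-- `z` is the infimum of `v` and `w` w.r.t. the canonical order. -/
def IsTInf {M : Type*} [Add M] (v w z : M) : Prop :=
  tle z v ∧ tle z w ∧ ∀ y : M, tle y v → tle y w → tle y z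

/-- A tropical module is straight if it is a finitely distributive ordered lattice. -/
def Straight (M : Type*) [Add M] : Prop :=
  (∀ v w : M, ∃ z : M, IsTInf v w z) ∧
    ∀ v₁ v₂ w z₁ z₂ : M, IsTInf v₁ w z₁ → IsTInf v₂ w z₂ → IsTInf (v₁ + v₂) w (z₁ + z₂)

/-- Infimum of `v` and `w` within the subset `N`. -/
def IsTInfOn {M : Type*} [Add M] (N : Set M) (v w z : M) : Prop :=
  tle z v ∧ tle z w ∧ ∀ y ∈ N, tle y v → tle y w → tle y z

/-- A submodule (viewed as a subset) is straight. -/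
def StraightSet {M : Type*} [Add M] (N : Set M) : Prop :=
  (∀ v ∈ N, ∀ w ∈ N, ∃ z ∈ N, IsTInfOn N v w z) ∧
    ∀ v₁ ∈ N, ∀ v₂ ∈ N, ∀ w ∈ N, ∀ z₁ ∈ N, ∀ z₂ ∈ N,
      IsTInfOn N v₁ w z₁ → IsTInfOn N v₂ w z₂ → IsTInfOn N (v₁ + v₂) w (z₁ + z₂)

/-! ## Generation, bases, extremal elements -/

/-- `S` generates the `k`-module `M`. -/
def TGenerates (k : Type*) {M : Type*} [TropSemifield k] [TropSemigroup M] [TropModule k M]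
    (S : Set M) : Prop :=
  ∀ v : M, ∃ (r : ℕ) (a : Fin r → k) (x : Fin r → M), (∀ i, x i ∈ S) ∧ v = ∑ i, a i • x i

/-- `M` is finitely generated. -/
def TFG (k : Type*) (M : Type*) [TropSemifield k] [TropSemigroup M] [TropModule k M] : Prop :=
  ∃ S : Finset M, TGenerates k (↑S : Set M)

/-- A basis: a generating set no proper subset of which generates. -/
def TBasis (k : Type*) {M : Type*} [TropSemifield k] [TropSemigroup M] [TropModule k M]
    (S : Set M) : Prop :=
  TGenerates k S ∧ ∀ T : Set M, T ⊂ S → ¬ TGenerates k T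

/-- `S` generates the subset `N` (viewed as a submodule of `M`). -/
def TGeneratesOn (k : Type*) {M : Type*} [TropSemifield k] [TropSemigroup M] [TropModule k M]
    (N S : Set M) : Prop :=
  ∀ v ∈ N, ∃ (r : ℕ) (a : Fin r → k) (x : Fin r → M), (∀ i, x i ∈ S) ∧ v = ∑ i, a i • x i

/-- A basis of the submodule `N ⊆ M`. -/
def TBasisOn (k : Type*) {M : Type*} [TropSemifield k] [TropSemigroup M] [TropModule k M]
    (N S : Set M) : Prop :=
  S ⊆ N ∧ TGeneratesOn k N S ∧ ∀ T : Set M, T ⊂ S → ¬ TGeneratesOn k N T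

/-- An extremal element. -/
def TExtremal {M : Type*} [Add M] [Zero M] (e : M) : Prop :=
  e ≠ 0 ∧ ∀ v w : M, v + w = e → v = e ∨ w = e

/-- The ray `k ⊙ e` generated by an element. -/
def tray (k : Type*) {M : Type*} [TropSemifield k] [TropSemigroup M] [TropModule k M]
    (e : M) : Set M :=
  Set.range fun a : k => a • e

/-- The set of extremal rays of `M`. -/
def extRays (k : Type*) (M : Type*) [TropSemifield k] [TropSemigroup M] [TropModule k M] :
    Set (Set M) :=
  {R : Set M | ∃ e : M, TExtremal e ∧ R = tray k e}

/-- The dimension of a straight reflexive module: the number of extremal rays. -/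
noncomputable def tdim (k : Type*) (M : Type*) [TropSemifield k] [TropSemigroup M]
    [TropModule k M] : ℕ :=
  (extRays k M).ncard

/-! ## Further notions on homomorphisms -/

/-- A lightly surjective homomorphism. -/
def LightlySurjective {k M N : Type*} [TropSemifield k] [TropSemigroup M] [TropModule k M]
    [TropSemigroup N] [TropModule k N] (α : TropHom k M N) : Prop :=
  ∀ w : N, ∃ v : M, tle w (α.toFun v)

/-- A lattice-preserving homomorphism. -/
def LatticePreserving {k M N : Type*} [TropSemifield k] [TropSemigroup M] [TropModule k M]
    [TropSemigroup N] [TropModule k N] (α : TropHom k M N) : Prop :=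
  ∀ v w : M, ∀ x : N, tle x (α.toFun v) → tle x (α.toFun w) →
    ∃ y : M, tle y v ∧ tle y w ∧ tle x (α.toFun y)

/-- The inclusion of the subset `N` into the ambient module is lattice-preserving. -/
def LatPresSet {M : Type*} [Add M] (N : Set M) : Prop :=
  ∀ v ∈ N, ∀ w ∈ N, ∀ x : M, tle x v → tle x w → ∃ y ∈ N, tle y v ∧ tle y w ∧ tle x y

/-- `η` is the dual element of `e`: `⟨e,η⟩ = 0` and
`⟨v,η⟩ ⊙ ⟨e,ξ⟩ ≤ ⟨v,ξ⟩` for all `v`, `ξ`. -/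
def IsDualElement {k M : Type*} [TropSemifield k] [TropSemigroup M] [TropModule k M]
    (e : M) (η : TropHom k M k) : Prop :=
  η.toFun e = 1 ∧ ∀ (v : M) (ξ : TropHom k M k), tle (η.toFun v * ξ.toFun e) (ξ.toFun v)

/-! ## Locators -/

/-- A locator of `M`: a lower-saturated subsemigroup of `(M, ⊕)` that generates `M`. -/
structure IsLocator (k : Type*) {M : Type*} [TropSemifield k] [TropSemigroup M] [TropModule k M]
    (S : Set M) : Prop where
  lower : ∀ v w : M, tle v w → w ∈ S → v ∈ S
  add_mem : ∀ v ∈ S, ∀ w ∈ S, v + w ∈ S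
  generates : TGenerates k S

/-- The multiplicative inverse `⊘a` (junk value `−∞` at `−∞`). -/
noncomputable def tinv {k : Type*} [TropSemifield k] (a : k) : k := by
  classical exact if h : a = 0 then 0 else Classical.choose (TropSemifield.exists_inv a h)

/-- Scalar multiplication on locators: `a ⊙̌ S = (⊘a) ⊙ S` for `a ≠ −∞`, `(−∞) ⊙̌ S = M`. -/
noncomputable def locSMul {k M : Type*} [TropSemifield k] [TropSemigroup M] [TropModule k M]
    (a : k) (S : Set M) : Set M := by
  classical exact if a = 0 then Set.univ else (fun v => tinv a • v) '' S

/-- `U` is the infimum of the locators `S`, `T` in `Loc(M)` (whose canonical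
order is reverse inclusion, the sum being intersection). -/
def IsLocInf (k : Type*) {M : Type*} [TropSemifield k] [TropSemigroup M] [TropModule k M]
    (S T U : Set M) : Prop :=
  IsLocator k U ∧ S ⊆ U ∧ T ⊆ U ∧
    ∀ W : Set M, IsLocator k W → S ⊆ W → T ⊆ W → U ⊆ W

/-! ## Submodules -/

/-- A subset of a `k`-module which is a submodule. -/
structure IsTSubmodule (k : Type*) {M : Type*} [TropSemifield k] [TropSemigroup M]
    [TropModule k M] (N : Set M) : Prop where
  zero_mem : (0 : M) ∈ N
  add_mem : ∀ v ∈ N, ∀ w ∈ N, v + w ∈ N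
  smul_mem : ∀ (a : k), ∀ v ∈ N, a • v ∈ N

/-- A bundled submodule of a `k`-module. -/
structure TSub (k : Type*) (M : Type*) [TropSemifield k] [TropSemigroup M] [TropModule k M] where
  carrier : Set M
  zero_mem : (0 : M) ∈ carrier
  add_mem : ∀ v ∈ carrier, ∀ w ∈ carrier, v + w ∈ carrier
  smul_mem : ∀ (a : k), ∀ v ∈ carrier, a • v ∈ carrier

instance TSub.instZero {k M : Type*} [TropSemifield k] [TropSemigroup M] [TropModule k M]
    (N : TSub k M) : Zero ↥N.carrier :=
  ⟨⟨0, N.zero_mem⟩⟩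

instance TSub.instAdd {k M : Type*} [TropSemifield k] [TropSemigroup M] [TropModule k M]
    (N : TSub k M) : Add ↥N.carrier :=
  ⟨fun v w => ⟨v.1 + w.1, N.add_mem v.1 v.2 w.1 w.2⟩⟩

instance TSub.instSMul {k M : Type*} [TropSemifield k] [TropSemigroup M] [TropModule k M]
    (N : TSub k M) : SMul k ↥N.carrier :=
  ⟨fun a v => ⟨a • v.1, N.smul_mem a v.1 v.2⟩⟩

instance TSub.semigroup {k M : Type*} [TropSemifield k] [TropSemigroup M] [TropModule k M]
    (N : TSub k M) : TropSemigroup ↥N.carrier where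
  add := (· + ·)
  zero := 0
  add_assoc a b c := Subtype.ext (add_assoc a.1 b.1 c.1)
  zero_add a := Subtype.ext (zero_add a.1)
  add_zero a := Subtype.ext (add_zero a.1)
  add_comm a b := Subtype.ext (add_comm a.1 b.1)
  nsmul := nsmulRec
  add_idem a := Subtype.ext (TropSemigroup.add_idem a.1)

instance TSub.module {k M : Type*} [TropSemifield k] [TropSemigroup M] [TropModule k M]
    (N : TSub k M) : TropModule k ↥N.carrier where
  smul := (· • ·)
  mul_smul a b v := Subtype.ext (TropModule.mul_smul a b v.1)
  one_smul v := Subtype.ext (TropModule.one_smul v.1)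
  add_smul a b v := Subtype.ext (TropModule.add_smul a b v.1)
  smul_add a v w := Subtype.ext (TropModule.smul_add a v.1 w.1)
  zero_smul v := Subtype.ext (TropModule.zero_smul v.1)
  smul_zero a := Subtype.ext (TropModule.smul_zero (M := M) a)

/-! ## Linear combinations -/

theorem tsmul_sum {k M : Type*} [TropSemifield k] [TropSemigroup M] [TropModule k M]
    (a : k) {ι : Type*} (s : Finset ι) (f : ι → M) :
    a • (∑ i ∈ s, f i) = ∑ i ∈ s, a • f i := by
  classical
  induction s using Finset.induction_on with
  | empty => simpa using TropModule.smul_zero (M := M) a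
  | insert _ _ h ih => rw [Finset.sum_insert h, Finset.sum_insert h, TropModule.smul_add, ih]

/-- The homomorphism `kⁿ → M` sending the `i`-th standard basis element to `e i`. -/
def linComb {k M : Type*} [TropSemifield k] [TropSemigroup M] [TropModule k M] {n : ℕ}
    (e : Fin n → M) : TropHom k (Fin n → k) M where
  toFun v := ∑ i, v i • e i
  map_zero' :=
    (Finset.sum_congr rfl fun i _ => TropModule.zero_smul (e i)).trans Finset.sum_const_zero
  map_add' v w := by
    rw [← Finset.sum_add_distrib]
    exact Finset.sum_congr rfl fun i _ => TropModule.add_smul (v i) (w i) (e i)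
  map_smul' a v := by
    rw [tsmul_sum]
    exact Finset.sum_congr rfl fun i _ => TropModule.mul_smul a (v i) (e i)

/-- The homomorphism `M → kⁿ` induced by an `n`-tuple of elements of `M∨`. -/
def dualTuple {k M : Type*} [TropSemifield k] [TropSemigroup M] [TropModule k M] {n : ℕ}
    (η : Fin n → TropHom k M k) : TropHom k M (Fin n → k) where
  toFun v := fun i => (η i).toFun v
  map_zero' := funext fun i => (η i).map_zero'
  map_add' v w := funext fun i => (η i).map_add' v w
  map_smul' a v := funext fun i => (η i).map_smul' a v

/-! ## Auxiliary lemmas -/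

section Aux

variable {k : Type*} [TropSemifield k]

section Semigroup
variable {M : Type*} [TropSemigroup M]

theorem tle_refl' (v : M) : tle v v := TropSemigroup.add_idem v

theorem tle_trans' {u v w : M} (h1 : tle u v) (h2 : tle v w) : tle u w := by
  unfold tle at *
  rw [← h2, ← add_assoc, h1]

theorem tle_antisymm' {u v : M} (h1 : tle u v) (h2 : tle v u) : u = v := by
  calc u = v + u := h2.symm
  _ = u + v := add_comm _ _
  _ = v := h1

theorem zero_tle' (v : M) : tle (0 : M) v := zero_add v

theorem tle_zero' {v : M} (h : tle v 0) : v = 0 := by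
  rw [← h, add_zero]

theorem tle_add_left' (v w : M) : tle v (v + w) := by
  unfold tle
  rw [← add_assoc, TropSemigroup.add_idem]

theorem tle_add_right' (v w : M) : tle w (v + w) := by
  unfold tle
  rw [add_left_comm, TropSemigroup.add_idem]

theorem add_tle' {v w x : M} (h1 : tle v x) (h2 : tle w x) : tle (v + w) x := by
  unfold tle at *
  rw [add_assoc, h2, h1]

theorem tle_add_tle' {v v' w w' : M} (h1 : tle v v') (h2 : tle w w') :
    tle (v + w) (v' + w') := by
  unfold tle at *
  rw [add_add_add_comm, h1, h2]

theorem sum_tle' {ι : Type*} {s : Finset ι} {f : ι → M} {x : M}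
    (h : ∀ i ∈ s, tle (f i) x) : tle (∑ i ∈ s, f i) x := by
  classical
  induction s using Finset.cons_induction with
  | empty => simpa using zero_tle' x
  | cons a s ha ih =>
    rw [Finset.sum_cons]
    exact add_tle' (h a (Finset.mem_cons_self a s))
      (ih fun i hi => h i (Finset.mem_cons_of_mem hi))

theorem sum_tle_sum' {ι : Type*} {s : Finset ι} {f g : ι → M}
    (h : ∀ i ∈ s, tle (f i) (g i)) : tle (∑ i ∈ s, f i) (∑ i ∈ s, g i) := by
  classical
  induction s using Finset.cons_induction with
  | empty => simpa using tle_refl' (0 : M)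
  | cons a s ha ih =>
    rw [Finset.sum_cons, Finset.sum_cons]
    exact tle_add_tle' (h a (Finset.mem_cons_self a s))
      (ih fun i hi => h i (Finset.mem_cons_of_mem hi))

theorem tle_sum' {ι : Type*} {s : Finset ι} (f : ι → M) {i : ι} (hi : i ∈ s) :
    tle (f i) (∑ j ∈ s, f j) := by
  classical
  rw [← Finset.add_sum_erase s f hi]
  exact tle_add_left' _ _

end Semigroup

section KLemmas

theorem mul_tle' {a b : k} (c : k) (h : tle a b) : tle (c * a) (c * b) := by
  unfold tle at *
  rw [← mul_add, h]

theorem mul_tle_right' {a b : k} (c : k) (h : tle a b) : tle (a * c) (b * c) := by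
  rw [mul_comm a c, mul_comm b c]; exact mul_tle' c h

theorem tinv_mul_self {a : k} (h : a ≠ 0) : a * tinv a = 1 := by
  unfold tinv
  rw [dif_neg h]
  exact Classical.choose_spec (TropSemifield.exists_inv a h)

theorem mul_tle_cancel' {a b c : k} (hc : c ≠ 0) (h : tle (a * c) (b * c)) : tle a b := by
  have := mul_tle_right' (tinv c) h
  rwa [mul_assoc, mul_assoc, tinv_mul_self hc, mul_one, mul_one] at this

theorem mul_cancel' {a b c : k} (hc : c ≠ 0) (h : a * c = b * c) : a = b := by
  have : a * c * tinv c = b * c * tinv c := by rw [h]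
  rwa [mul_assoc, mul_assoc, tinv_mul_self hc, mul_one, mul_one] at this

end KLemmas

section Module
variable {M : Type*} [TropSemigroup M] [TropModule k M]

theorem smul_tle' (a : k) {v w : M} (h : tle v w) : tle (a • v) (a • w) := by
  unfold tle at *
  rw [← TropModule.smul_add, h]

theorem tle_smul' {a b : k} (v : M) (h : tle a b) : tle (a • v) (b • v) := by
  unfold tle at *
  rw [← TropModule.add_smul, h]

theorem smul_eq_zero_cancel {a : k} {v : M} (ha : a ≠ 0) (h : a • v = 0) : v = 0 := by
  have : tinv a • a • v = tinv a • (0 : M) := by rw [h]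
  rwa [← TropModule.mul_smul, mul_comm, tinv_mul_self ha, TropModule.one_smul,
    TropModule.smul_zero] at this

theorem tsum_smul' {ι : Type*} (s : Finset ι) (c : ι → k) (v : M) :
    (∑ i ∈ s, c i) • v = ∑ i ∈ s, c i • v := by
  classical
  induction s using Finset.cons_induction with
  | empty => simpa using TropModule.zero_smul v
  | cons a s ha ih => rw [Finset.sum_cons, Finset.sum_cons, TropModule.add_smul, ih]

end Module

section Hom
variable {M N : Type*} [TropSemigroup M] [TropModule k M] [TropSemigroup N] [TropModule k N]

theorem hom_tle (f : TropHom k M N) {v w : M} (h : tle v w) :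
    tle (f.toFun v) (f.toFun w) := by
  unfold tle at *
  rw [← f.map_add', h]

theorem hom_map_sum (f : TropHom k M N) {ι : Type*} (s : Finset ι) (g : ι → M) :
    f.toFun (∑ i ∈ s, g i) = ∑ i ∈ s, f.toFun (g i) := by
  classical
  induction s using Finset.cons_induction with
  | empty => simpa using f.map_zero'
  | cons a s ha ih => rw [Finset.sum_cons, Finset.sum_cons, f.map_add', ih]

theorem hom_smul_k (ζ : TropHom k M k) (a : k) (v : M) :
    ζ.toFun (a • v) = a * ζ.toFun v :=
  ζ.map_smul' a v

end Hom

end Aux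
section Aux2
variable {k : Type*} [TropSemifield k]
variable {M : Type*} [TropSemigroup M] [TropModule k M]

/-- If `e ≠ 0` in a pre-reflexive module, some functional does not vanish on `e`. -/
theorem exists_sep (hpre : Function.Injective (iotaFun k M)) {e : M} (he : e ≠ 0) :
    ∃ ζ : TropHom k M k, ζ.toFun e ≠ 0 := by
  by_contra h
  push_neg at h
  apply he
  apply hpre
  apply TropHom.ext'
  intro ξ
  show ξ.toFun e = ξ.toFun 0
  rw [h ξ, ξ.map_zero']

/-- Order on a pre-reflexive module is detected by functionals. -/
theorem tle_of_forall_hom (hpre : Function.Injective (iotaFun k M)) {v w : M}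
    (h : ∀ ζ : TropHom k M k, tle (ζ.toFun v) (ζ.toFun w)) : tle v w := by
  show v + w = w
  apply hpre
  apply TropHom.ext'
  intro ξ
  show ξ.toFun (v + w) = ξ.toFun w
  rw [ξ.map_add']
  exact h ξ

/-- Saturation: the supremum `sup {a : a • e ≤ u}` exists and is attained. -/
theorem sat_exists (hqc : QuasiCompleteTSF k)
    (hpre : Function.Injective (iotaFun k M)) {e : M} (he : e ≠ 0) (u : M) :
    ∃ c : k, tle (c • e) u ∧ ∀ a : k, tle (a • e) u → tle a c := by
  obtain ⟨ζ, hζ⟩ := exists_sep hpre he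
  set U : Set k := {d | ∀ a : k, tle (a • e) u → tle a d} with hU
  have hub : ∀ (ξ : TropHom k M k), ξ.toFun e ≠ 0 → ξ.toFun u * tinv (ξ.toFun e) ∈ U := by
    intro ξ hξ a ha
    have h1 : tle (a * ξ.toFun e) (ξ.toFun u) := by
      have := hom_tle ξ ha
      rwa [hom_smul_k] at this
    have h2 := mul_tle_right' (tinv (ξ.toFun e)) h1
    rwa [mul_assoc, tinv_mul_self hξ, mul_one] at h2
  obtain ⟨c, hc1, hc2⟩ := hqc U ⟨_, hub ζ hζ⟩
  refine ⟨c, ?_, ?_⟩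
  · apply tle_of_forall_hom hpre
    intro ξ
    rw [hom_smul_k]
    by_cases hξ : ξ.toFun e = 0
    · rw [hξ, mul_zero]
      exact zero_tle' _
    · have := hc1 _ (hub ξ hξ)
      have h3 := mul_tle_right' (ξ.toFun e) this
      rwa [mul_assoc, mul_comm (tinv _), tinv_mul_self hξ, mul_one] at h3
  · intro a ha
    exact hc2 a (fun x hx => hx a ha)

/-- Homogeneity of the saturation function. -/
theorem sat_smul {e : M} (he : e ≠ 0) (F : M → k)
    (h1 : ∀ u : M, tle (F u • e) u)
    (h2 : ∀ (u : M) (a : k), tle (a • e) u → tle a (F u))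
    (a : k) (u : M) : F (a • u) = a * F u := by
  by_cases ha : a = 0
  · subst ha
    rw [TropModule.zero_smul, zero_mul]
    have h0 : F (0 : M) • e = 0 := tle_zero' (h1 0)
    by_contra hF
    exact he (smul_eq_zero_cancel hF h0)
  · apply tle_antisymm'
    · -- F (a • u) ≤ a * F u
      have key : tle (tinv a * F (a • u)) (F u) := by
        apply h2
        have := smul_tle' (tinv a) (h1 (a • u))
        rwa [← TropModule.mul_smul, ← TropModule.mul_smul, mul_comm (tinv a) a,
          tinv_mul_self ha, TropModule.one_smul] at this
      have := mul_tle' a key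
      rwa [← mul_assoc, tinv_mul_self ha, one_mul] at this
    · -- a * F u ≤ F (a • u)
      apply h2
      rw [TropModule.mul_smul]
      exact smul_tle' a (h1 u)

end Aux2
section Aux3
variable {k : Type*} [TropSemifield k]
variable {M : Type*} [TropSemigroup M] [TropModule k M]

/-- Membership in the span of a subset. -/
def inSpan (k : Type*) {M : Type*} [TropSemifield k] [TropSemigroup M] [TropModule k M]
    (T : Set M) (v : M) : Prop :=
  ∃ (r : ℕ) (a : Fin r → k) (x : Fin r → M), (∀ i, x i ∈ T) ∧ v = ∑ i, a i • x i

theorem inSpan_zero (T : Set M) : inSpan k T 0 :=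
  ⟨0, Fin.elim0, Fin.elim0, fun i => i.elim0, by simp⟩

theorem inSpan_mem {T : Set M} {x : M} (hx : x ∈ T) : inSpan k T x :=
  ⟨1, fun _ => 1, fun _ => x, fun _ => hx, by simp [TropModule.one_smul]⟩

theorem inSpan_smul {T : Set M} {v : M} (a : k) (hv : inSpan k T v) : inSpan k T (a • v) := by
  obtain ⟨r, b, x, hx, rfl⟩ := hv
  refine ⟨r, fun i => a * b i, x, hx, ?_⟩
  rw [tsmul_sum]
  exact Finset.sum_congr rfl fun i _ => (TropModule.mul_smul a (b i) (x i)).symm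

theorem inSpan_add {T : Set M} {v w : M} (hv : inSpan k T v) (hw : inSpan k T w) :
    inSpan k T (v + w) := by
  obtain ⟨r, a, x, hx, rfl⟩ := hv
  obtain ⟨s, b, y, hy, rfl⟩ := hw
  refine ⟨r + s, Fin.append a b, Fin.append x y, ?_, ?_⟩
  · intro i
    refine Fin.addCases (fun j => ?_) (fun j => ?_) i
    · rw [Fin.append_left]
      exact hx j
    · rw [Fin.append_right]
      exact hy j
  · rw [Fin.sum_univ_add]
    congr 1
    · exact Finset.sum_congr rfl fun j _ => by rw [Fin.append_left, Fin.append_left]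
    · exact Finset.sum_congr rfl fun j _ => by rw [Fin.append_right, Fin.append_right]


theorem inSpan_sum {T : Set M} {ι : Type*} (s : Finset ι) (f : ι → M)
    (h : ∀ i ∈ s, inSpan k T (f i)) : inSpan k T (∑ i ∈ s, f i) := by
  classical
  induction s using Finset.cons_induction with
  | empty => simpa using inSpan_zero T
  | cons a s ha ih =>
    rw [Finset.sum_cons]
    exact inSpan_add (h a (Finset.mem_cons_self a s))
      (ih fun i hi => h i (Finset.mem_cons_of_mem hi))

/-- If `S` generates and every element of `S` is in the span of `T`, then `T` generates. -/
theorem generates_of_span {S T : Set M} (hS : TGenerates k S)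
    (h : ∀ x ∈ S, inSpan k T x) : TGenerates k T := by
  intro v
  obtain ⟨r, a, x, hx, rfl⟩ := hS v
  exact inSpan_sum _ _ fun i _ => inSpan_smul (a i) (h (x i) (hx i))

/-- Representation with respect to a fixed tuple. -/
theorem rep_tuple {n : ℕ} (t : Fin n → M) :
    ∀ (r : ℕ) (a : Fin r → k) (x : Fin r → M), (∀ i, ∃ j, x i = t j) →
      ∃ c : Fin n → k, ∑ i, a i • x i = ∑ j, c j • t j := by
  intro r
  induction r with
  | zero =>
    intro a x _
    refine ⟨fun _ => 0, ?_⟩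
    rw [Fin.sum_univ_zero]
    exact (Finset.sum_eq_zero fun j _ => TropModule.zero_smul (t j)).symm
  | succ r ih =>
    intro a x hx
    obtain ⟨c, hc⟩ := ih (fun i => a i.succ) (fun i => x i.succ) (fun i => hx i.succ)
    obtain ⟨j₀, hj₀⟩ := hx 0
    classical
    refine ⟨fun j => (if j = j₀ then a 0 else 0) + c j, ?_⟩
    rw [Fin.sum_univ_succ, hc]
    have : ∀ j : Fin n, ((if j = j₀ then a 0 else 0) + c j) • t j
        = (if j = j₀ then a 0 • t j else 0) + c j • t j := by
      intro j
      rw [TropModule.add_smul]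
      congr 1
      split
      · rfl
      · exact TropModule.zero_smul (t j)
    rw [Finset.sum_congr rfl fun j _ => this j, Finset.sum_add_distrib,
      Finset.sum_ite_eq' Finset.univ j₀ (fun j => a 0 • t j)]
    simp [hj₀]

end Aux3
section Aux4
variable {k : Type*} [TropSemifield k]
variable {M : Type*} [TropSemigroup M] [TropModule k M]

theorem basis_ne_zero {S : Set M} (hS : TBasis k S) {e : M} (he : e ∈ S) : e ≠ 0 := by
  intro h0
  apply hS.2 (S \ {e}) (Set.sdiff_singleton_ssubset.mpr he)
  apply generates_of_span hS.1
  intro x hx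
  by_cases hxe : x = e
  · rw [hxe, h0]
    exact inSpan_zero _
  · exact inSpan_mem ⟨hx, hxe⟩

/-- Decomposition of an element of the span of `S` into a part in the span of
`S \ {e}` and a multiple of `e`. -/
theorem span_decomp {S : Set M} (hS : TGenerates k S) (e z : M) :
    ∃ (u : M) (b : k), inSpan k (S \ {e}) u ∧ z = u + b • e := by
  classical
  obtain ⟨r, a, x, hx, hz⟩ := hS z
  refine ⟨∑ i, (if x i = e then 0 else a i) • x i, ∑ i, (if x i = e then a i else (0 : k)), ?_, ?_⟩
  · apply inSpan_sum
    intro i _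
    by_cases h : x i = e
    · simp only [if_pos h, TropModule.zero_smul]
      exact inSpan_zero _
    · simp only [if_neg h]
      exact inSpan_smul _ (inSpan_mem ⟨hx i, h⟩)
  · rw [hz, tsum_smul', ← Finset.sum_add_distrib]
    apply Finset.sum_congr rfl
    intro i _
    by_cases h : x i = e
    · rw [if_pos h, if_pos h, TropModule.zero_smul, zero_add, h]
    · rw [if_neg h, if_neg h, TropModule.zero_smul, add_zero]

/-- Every element of a basis of a straight pre-reflexive module is join-prime. -/
theorem basis_prime (hto : TotallyOrderedTSF k) (hqc : QuasiCompleteTSF k)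
    (hMs : Straight M) (hMpre : Function.Injective (iotaFun k M))
    {S : Set M} (hS : TBasis k S) {e : M} (he : e ∈ S) :
    ∀ v w : M, tle e (v + w) → tle e v ∨ tle e w := by
  intro v w hvw
  by_contra hcon
  push_neg at hcon
  obtain ⟨hv, hw⟩ := hcon
  have he0 : e ≠ 0 := basis_ne_zero hS he
  obtain ⟨ζ, hζ⟩ := exists_sep hMpre he0
  choose F hF1 hF2 using sat_exists hqc hMpre he0
  obtain ⟨z₁, hz₁⟩ := hMs.1 v e
  obtain ⟨z₂, hz₂⟩ := hMs.1 w e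
  have hz := hMs.2 v w e z₁ z₂ hz₁ hz₂
  have heq : e = z₁ + z₂ :=
    tle_antisymm' (hz.2.2 e hvw (tle_refl' e)) (add_tle' hz₁.2.1 hz₂.2.1)
  -- the saturation values
  have hcle : ∀ z : M, tle z e → tle (F z) 1 := by
    intro z hze
    have h1 : tle (F z • e) e := tle_trans' (hF1 z) hze
    have h2 : tle (F z * ζ.toFun e) (1 * ζ.toFun e) := by
      rw [one_mul]
      have := hom_tle ζ h1
      rwa [hom_smul_k] at this
    exact mul_tle_cancel' hζ h2
  have hcne : ∀ z : M, tle z e → F z = 1 → tle e z := by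
    intro z _ h1
    have := hF1 z
    rwa [h1, TropModule.one_smul] at this
  have hc1 : F z₁ ≠ 1 := fun h => hv (tle_trans' (hcne z₁ hz₁.2.1 h) hz₁.1)
  have hc2 : F z₂ ≠ 1 := fun h => hw (tle_trans' (hcne z₂ hz₂.2.1 h) hz₂.1)
  set c : k := F z₁ + F z₂ with hc
  have hcle1 : tle c 1 := add_tle' (hcle z₁ hz₁.2.1) (hcle z₂ hz₂.2.1)
  have hcne1 : c ≠ 1 := by
    rcases hto (F z₁) (F z₂) with h | h
    · rw [hc, h]
      exact hc2
    · rw [hc, add_comm, h]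
      exact hc1
  -- decompose
  obtain ⟨u₁, b₁, hu₁, hzu₁⟩ := span_decomp hS.1 e z₁
  obtain ⟨u₂, b₂, hu₂, hzu₂⟩ := span_decomp hS.1 e z₂
  have hb₁ : tle b₁ (F z₁) := hF2 z₁ b₁ (by rw [hzu₁]; exact tle_add_right' _ _)
  have hb₂ : tle b₂ (F z₂) := hF2 z₂ b₂ (by rw [hzu₂]; exact tle_add_right' _ _)
  set u : M := u₁ + u₂ with hu
  set b : k := b₁ + b₂ with hb
  have hbc : tle b c := tle_add_tle' hb₁ hb₂
  have heu : e = u + b • e := by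
    calc e = z₁ + z₂ := heq
    _ = (u₁ + b₁ • e) + (u₂ + b₂ • e) := by rw [← hzu₁, ← hzu₂]
    _ = (u₁ + u₂) + (b₁ • e + b₂ • e) := add_add_add_comm _ _ _ _
    _ = u + b • e := by rw [hu, hb, TropModule.add_smul]
  have key : ∀ ξ : TropHom k M k, ξ.toFun e = ξ.toFun u := by
    intro ξ
    have he' : ξ.toFun e = ξ.toFun u + b * ξ.toFun e := by
      conv_lhs => rw [heu]
      rw [ξ.map_add', hom_smul_k]
    rcases hto (ξ.toFun u) (b * ξ.toFun e) with h | h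
    · have h2 : ξ.toFun e = b * ξ.toFun e := by
        conv_lhs => rw [he']
        exact h
      by_cases h0 : ξ.toFun e = 0
      · rw [h0, mul_zero, add_zero] at he'
        rw [h0]
        exact he'
      · exfalso
        have hb1 : b = 1 := mul_cancel' h0 (by rw [← h2, one_mul])
        apply hcne1
        apply tle_antisymm' hcle1
        rw [← hb1]
        exact hbc
    · rw [he', add_comm, h]
  have heu' : e = u := by
    apply hMpre
    apply TropHom.ext'
    intro ξ
    exact key ξ
  have hespan : inSpan k (S \ {e}) e := by
    have h' := inSpan_add hu₁ hu₂
    have heu'' : e = u₁ + u₂ := heu'.trans hu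
    rwa [← heu''] at h'
  apply hS.2 (S \ {e}) (Set.sdiff_singleton_ssubset.mpr he)
  apply generates_of_span hS.1
  intro x hx
  by_cases hxe : x = e
  · rw [hxe]
    exact hespan
  · exact inSpan_mem ⟨hx, hxe⟩

end Aux4
theorem stmt4 {k M N : Type*} [TropSemifield k] [TropSemigroup M] [TropModule k M]
    [TropSemigroup N] [TropModule k N]
    (hto : TotallyOrderedTSF k) (hqc : QuasiCompleteTSF k) (hrat : RationalTSF k)
    (hMs : Straight M) (hNs : Straight N)
    (hMpre : Function.Injective (iotaFun k M)) (hNpre : Function.Injective (iotaFun k N))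
    (α : TropHom k M N) (hinj : Function.Injective α.toFun)
    (hbasis : ∃ S : Set M, TBasis k S) (hNfg : TFG k N) :
    TFG k M := by
  classical
  obtain ⟨S, hSb⟩ := hbasis
  obtain ⟨hSgen, hSmin⟩ := hSb
  -- nontriviality of k
  have h10 : (1 : k) ≠ 0 := by
    obtain ⟨b, hb⟩ := hrat.2 0
    intro h
    exact hb.2 (by rw [← mul_one b, h, mul_zero] : b = 0).symm
  -- generators of N
  obtain ⟨TN, hTN⟩ := hNfg
  set n := TN.card with hn
  set t : Fin n → N := fun j => ((TN.equivFin.symm j : ↥TN) : N) with ht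
  have hrepN : ∀ w : N, ∃ c : Fin n → k, w = ∑ j, c j • t j := by
    intro w
    obtain ⟨r, a, x, hx, hw⟩ := hTN w
    obtain ⟨c, hc⟩ := rep_tuple t r a x
      (fun i => ⟨TN.equivFin ⟨x i, hx i⟩, by simp [ht]⟩)
    exact ⟨c, hw.trans hc⟩
  -- the saturation functionals on N
  choose! etaN hetaN1 hetaN2 using
    fun (x : N) (hx : x ≠ 0) (w : N) => sat_exists hqc hNpre hx w
  set nu : Fin n → N → k := fun i w => if t i = 0 then 0 else etaN (t i) w with hnuDef
  have hnu1 : ∀ (i : Fin n) (w : N), tle (nu i w • t i) w := by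
    intro i w
    by_cases h : t i = 0
    · rw [h, TropModule.smul_zero]
      exact zero_tle' w
    · simp only [hnuDef, if_neg h]
      exact hetaN1 (t i) h w
  have hnu2 : ∀ (i : Fin n) (w : N) (a : k), t i ≠ 0 → tle (a • t i) w → tle a (nu i w) := by
    intro i w a h hle
    simp only [hnuDef, if_neg h]
    exact hetaN2 (t i) h w a hle
  have hdecompN : ∀ w : N, w = ∑ j, nu j w • t j := by
    intro w
    apply tle_antisymm'
    · obtain ⟨c, hc⟩ := hrepN w
      conv_lhs => rw [hc]
      apply sum_tle_sum'
      intro j _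
      by_cases h : t j = 0
      · rw [h, TropModule.smul_zero, TropModule.smul_zero]
        exact tle_refl' _
      · refine tle_smul' (t j) (hnu2 j w (c j) h ?_)
        rw [hc]
        exact tle_sum' (fun j => c j • t j) (Finset.mem_univ j)
    · exact sum_tle' fun j _ => hnu1 j w
  have hnuscal : ∀ (i : Fin n) (a : k) (w : N), t i ≠ 0 → nu i (a • w) = a * nu i w := by
    intro i a w h
    exact sat_smul (k := k) (M := N) h (fun w => nu i w) (fun w => hnu1 i w)
      (fun w b hb => hnu2 i w b h hb) a w
  -- the saturation functionals on M
  choose! etaM hM1 hM2 using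
    fun (x : M) (hx : x ≠ 0) (u : M) => sat_exists hqc hMpre hx u
  have hMscal : ∀ (e : M), e ≠ 0 → ∀ (a : k) (u : M), etaM e (a • u) = a * etaM e u :=
    fun e he a u => sat_smul he (etaM e) (hM1 e he) (hM2 e he) a u
  -- basic facts about the basis
  have hS0 : ∀ e ∈ S, e ≠ 0 := fun e he => basis_ne_zero ⟨hSgen, hSmin⟩ he
  have hprime : ∀ e ∈ S, ∀ v w : M, tle e (v + w) → tle e v ∨ tle e w :=
    fun e he => basis_prime hto hqc hMs hMpre ⟨hSgen, hSmin⟩ he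
  have hprimeFin : ∀ e ∈ S, ∀ (I : Finset (Fin n)) (f : Fin n → M),
      I.Nonempty → tle e (∑ i ∈ I, f i) → ∃ i ∈ I, tle e (f i) := by
    intro e he I
    induction I using Finset.cons_induction with
    | empty =>
      intro f hne _
      exact absurd hne (by simp)
    | cons a s ha ih =>
      intro f _ hle
      rw [Finset.sum_cons] at hle
      rcases hprime e he _ _ hle with h | h
      · exact ⟨a, Finset.mem_cons_self a s, h⟩
      · rcases s.eq_empty_or_nonempty with rfl | hs
        · rw [Finset.sum_empty] at h
          exact absurd (tle_zero' h) (hS0 e he)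
        · obtain ⟨i, hi, hif⟩ := ih f hs h
          exact ⟨i, Finset.mem_cons_of_mem hi, hif⟩
  -- the pairwise estimate
  have hpair : ∀ e ∈ S, ∀ f ∈ S, e ≠ f →
      tle (etaM e f * etaM f e) 1 ∧ etaM e f * etaM f e ≠ 1 := by
    intro e he f hf hef
    have he0 := hS0 e he
    have hf0 := hS0 f hf
    obtain ⟨ζ, hζ⟩ := exists_sep hMpre he0
    constructor
    · have h1 : tle ((etaM f e * etaM e f) • e) e := by
        rw [TropModule.mul_smul]
        exact tle_trans' (smul_tle' _ (hM1 e he0 f)) (hM1 f hf0 e)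
      have h2 : tle ((etaM f e * etaM e f) * ζ.toFun e) (1 * ζ.toFun e) := by
        rw [one_mul]
        have := hom_tle ζ h1
        rwa [hom_smul_k] at this
      have := mul_tle_cancel' hζ h2
      rwa [mul_comm] at this
    · intro h1
      have hfe : f = etaM e f • e := by
        have h2 : tle ((etaM e f * etaM f e) • f) (etaM e f • e) := by
          rw [TropModule.mul_smul]
          exact smul_tle' _ (hM1 f hf0 e)
        rw [h1, TropModule.one_smul] at h2
        exact tle_antisymm' h2 (hM1 e he0 f)
      have hespan : inSpan k (S \ {f}) f := by
        have h' : inSpan k (S \ {f}) (etaM e f • e) :=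
          inSpan_smul _ (inSpan_mem ⟨he, by simp [hef]⟩)
        rwa [← hfe] at h'
      apply hSmin (S \ {f}) (Set.sdiff_singleton_ssubset.mpr hf)
      apply generates_of_span hSgen
      intro x hx
      by_cases hxf : x = f
      · rw [hxf]
        exact hespan
      · exact inSpan_mem ⟨hx, hxf⟩
  -- the key index
  have hidx : ∀ e ∈ S, ∃ i : Fin n, nu i (α.toFun e) ≠ 0 ∧
      ∀ u : M, tle (nu i (α.toFun u)) (etaM e u * nu i (α.toFun e)) := by
    intro e he
    have he0 := hS0 e he
    have hαe0 : α.toFun e ≠ 0 := by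
      intro h
      exact he0 (hinj (by rw [h, α.map_zero']))
    by_contra hcon
    push_neg at hcon
    choose! uu huu using hcon
    set I : Finset (Fin n) := Finset.univ.filter (fun i => nu i (α.toFun e) ≠ 0) with hI
    have hne : I.Nonempty := by
      rcases Finset.eq_empty_or_nonempty I with hIe | hne
      · exfalso
        apply hαe0
        have hall : ∀ j : Fin n, nu j (α.toFun e) = 0 := by
          intro j
          by_contra hj
          have hjI : j ∈ I := Finset.mem_filter.mpr ⟨Finset.mem_univ j, hj⟩
          rw [hIe] at hjI
          exact absurd hjI (Finset.notMem_empty j)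
        calc α.toFun e = ∑ j, nu j (α.toFun e) • t j := hdecompN _
        _ = 0 := Finset.sum_eq_zero fun j _ => by rw [hall j, TropModule.zero_smul]
      · exact hne
    have htI : ∀ i ∈ I, t i ≠ 0 := by
      intro i hi h0
      apply (Finset.mem_filter.mp hi).2
      simp [hnuDef, h0]
    have hnuuu : ∀ i ∈ I, nu i (α.toFun (uu i)) ≠ 0 := by
      intro i hi h0
      apply huu i (Finset.mem_filter.mp hi).2
      rw [h0]
      exact zero_tle' _
    set d : Fin n → k := fun i => nu i (α.toFun e) * tinv (nu i (α.toFun (uu i))) with hd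
    have hdmul : ∀ i ∈ I, d i * nu i (α.toFun (uu i)) = nu i (α.toFun e) := by
      intro i hi
      simp only [hd]
      rw [mul_assoc, mul_comm (tinv _), tinv_mul_self (hnuuu i hi), mul_one]
    have hA : ∀ i ∈ I, nu i (α.toFun (d i • uu i)) = nu i (α.toFun e) := by
      intro i hi
      rw [α.map_smul', hnuscal i (d i) _ (htI i hi), hdmul i hi]
    have hB : ∀ i ∈ I, ¬ tle e (d i • uu i) := by
      intro i hi hle
      apply huu i (Finset.mem_filter.mp hi).2
      have h1 : tle 1 (etaM e (d i • uu i)) :=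
        hM2 e he0 _ 1 (by rw [TropModule.one_smul]; exact hle)
      rw [hMscal e he0 (d i) (uu i)] at h1
      have h2 := mul_tle' (nu i (α.toFun (uu i))) h1
      rw [mul_one] at h2
      rwa [← mul_assoc, mul_comm (nu i (α.toFun (uu i))) (d i), hdmul i hi,
        mul_comm (nu i (α.toFun e)) (etaM e (uu i))] at h2
    have hC : tle e (∑ i ∈ I, d i • uu i) := by
      have hstep : tle (∑ i ∈ I, nu i (α.toFun e) • t i)
          (∑ i ∈ I, α.toFun (d i • uu i)) := by
        apply sum_tle_sum'
        intro i hi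
        rw [← hA i hi]
        exact hnu1 i _
      have heqI : (∑ i ∈ I, nu i (α.toFun e) • t i) = α.toFun e := by
        calc (∑ i ∈ I, nu i (α.toFun e) • t i) = ∑ i, nu i (α.toFun e) • t i :=
          Finset.sum_subset (Finset.subset_univ I) (fun j _ hj => by
            have h0 : nu j (α.toFun e) = 0 := by
              by_contra hne0
              exact hj (Finset.mem_filter.mpr ⟨Finset.mem_univ j, hne0⟩)
            rw [h0, TropModule.zero_smul])
        _ = α.toFun e := (hdecompN _).symm
      rw [heqI] at hstep
      rw [← hom_map_sum] at hstep
      show e + _ = _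
      apply hinj
      rw [α.map_add']
      exact hstep
    obtain ⟨i, hi, hlei⟩ := hprimeFin e he I _ hne hC
    exact hB i hi hlei
  -- conclude: S injects into Fin n
  have hchoice : ∀ e : ↥S, ∃ i : Fin n, nu i (α.toFun (e : M)) ≠ 0 ∧
      ∀ u : M, tle (nu i (α.toFun u)) (etaM (e : M) u * nu i (α.toFun (e : M))) :=
    fun e => hidx e e.2
  choose φ hφ1 hφ2 using hchoice
  have hφinj : Function.Injective φ := by
    intro e f hef
    by_contra hne
    have hne' : (e : M) ≠ (f : M) := fun h => hne (Subtype.ext h)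
    have h1 := hφ2 e (f : M)
    have h2 := hφ2 f (e : M)
    rw [hef] at h1
    have hc0 : nu (φ f) (α.toFun (e : M)) ≠ 0 := by
      have := hφ1 e
      rwa [hef] at this
    have chain : tle (nu (φ f) (α.toFun (e : M)))
        ((etaM (e : M) (f : M) * etaM (f : M) (e : M)) * nu (φ f) (α.toFun (e : M))) := by
      have h3 := mul_tle' (etaM (f : M) (e : M)) h1
      have h4 := tle_trans' h2 h3
      rwa [← mul_assoc, mul_comm (etaM (f : M) (e : M)) (etaM (e : M) (f : M))] at h4
    have hge : tle 1 (etaM (e : M) (f : M) * etaM (f : M) (e : M)) := by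
      apply mul_tle_cancel' hc0
      rwa [one_mul]
    obtain ⟨hle1, hne1⟩ := hpair e e.2 f f.2 hne'
    exact hne1 (tle_antisymm' hle1 hge)
  have hfin : Finite ↥S := Finite.of_injective φ hφinj
  have hSfin : S.Finite := Set.finite_coe_iff.mp hfin
  exact ⟨hSfin.toFinset, by rw [Set.Finite.coe_toFinset]; exact hSgen⟩
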